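/- (FKG inequality for |h|.) Let D be a finite subset of ℤ², B ⊆ D, and let (B,κ) be an admissible |h|-adapted boundary condition such that κ_v ∩ ℤ₊ is an integer interval for every v ∈ B. Then for any two increasing functions F, G : ℤ^D → ℝ, φ_D^{B,κ}[F(|h|)G(|h|)] ≥ φ_D^{B,κ}[F(|h|)] · φ_D^{B,κ}[G(|h|)], where |h| denotes the pointwise absolute value of h. -/

import Mathlib

open scoped BigOperators

namespace SquareIce

/-- Vertices of the square lattice `ℤ²`. -/
abbrev V : Type := ℤ × ℤ

/-- Nearest-neighbour adjacency: Euclidean distance 1. -/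
def adj (u v : V) : Prop := (u.1 - v.1).natAbs + (u.2 - v.2).natAbs = 1

/-- Diagonal (`×`) adjacency: Euclidean distance `√2`. -/
def xadj (u v : V) : Prop := (u.1 - v.1).natAbs = 1 ∧ (u.2 - v.2).natAbs = 1

/-- `*`-adjacency: graph distance exactly 2 in `ℤ²`. -/
def starAdj (u v : V) : Prop := (u.1 - v.1).natAbs + (u.2 - v.2).natAbs = 2

/-- A vertex is even when the sum of its coordinates is even. -/
def IsEvenV (v : V) : Prop := Even (v.1 + v.2)

/-- Squared Euclidean distance between two vertices. -/
def distSq (u v : V) : ℤ := (u.1 - v.1) ^ 2 + (u.2 - v.2) ^ 2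

/-- Sup-norm of a vertex. -/
def infNorm (v : V) : ℤ := max |v.1| |v.2|

/-- `h` is a height function on `D` (normalised to vanish outside `D`):
increments of absolute value one along edges of `D`, and even values on even
vertices (equivalently, `h v` has the parity of `v.1 + v.2`). -/
def IsHeightFn (D : Set V) (h : V → ℤ) : Prop :=
  (∀ u v, u ∈ D → v ∈ D → adj u v → |h u - h v| = 1) ∧
  (∀ v ∈ D, Even (h v + v.1 + v.2)) ∧ (∀ v, v ∉ D → h v = 0)

/-- Boundary of `D`: vertices of `D` with a nearest neighbour outside `D`. -/
def bdry (D : Set V) : Set V := {v | v ∈ D ∧ ∃ u, u ∉ D ∧ adj u v}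

/-- `A` and `B` are joined by a `rel`-path all of whose vertices lie in `S`. -/
def Connected (rel : V → V → Prop) (S A B : Set V) : Prop :=
  ∃ p : List V, ∃ hp : p ≠ [], List.Chain' rel p ∧ (∀ v ∈ p, v ∈ S) ∧
    p.head hp ∈ A ∧ p.getLast hp ∈ B

/-- `S` is the vertex set of a closed `×`-path. -/
def IsXCircuit (S : Set V) : Prop :=
  ∃ p : List V, ∃ hp : p ≠ [], List.Chain' xadj p ∧ p.head hp = p.getLast hp ∧
    {v | v ∈ p} = S

/-- A domain: a finite set whose boundary is a `×`-circuit. -/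
def IsDomain (D : Set V) : Prop := D.Finite ∧ IsXCircuit (bdry D)

/-- An even domain: a domain whose boundary consists of even vertices. -/
def IsEvenDomain (D : Set V) : Prop := IsDomain D ∧ ∀ v ∈ bdry D, IsEvenV v

/-- Height functions on `D` whose value at every `v ∈ B` lies in `κ v`. -/
def HomSet (D B : Set V) (κ : V → Set ℤ) : Set (V → ℤ) :=
  {h | IsHeightFn D h ∧ ∀ v ∈ B, h v ∈ κ v}

/-- Height functions on `D` with prescribed boundary values `κ` on `∂D`. -/
def HomBC (D : Set V) (κ : V → ℤ) : Set (V → ℤ) :=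
  {h | IsHeightFn D h ∧ ∀ v ∈ bdry D, h v = κ v}

/-- Height functions on `D` vanishing on `∂D`. -/
def Hom0 (D : Set V) : Set (V → ℤ) := HomBC D (fun _ => 0)

/-- Probability of `A` under the uniform measure on the finite set `S`. -/
noncomputable def pr {α : Type*} (S A : Set α) : ℝ :=
  (Nat.card (S ∩ A : Set α) : ℝ) / (Nat.card S : ℝ)

/-- Expectation of `f` under the uniform measure on the finite set `S`. -/
noncomputable def expec {α : Type*} (S : Set α) (f : α → ℝ) : ℝ :=
  (∑ᶠ x ∈ S, f x) / (Nat.card S : ℝ)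

/-- The box `Λ_{a,b} = ([-a,a] × [-b,b]) ∩ ℤ²`. -/
def Lam2 (a b : ℤ) : Set V := {v | |v.1| ≤ a ∧ |v.2| ≤ b}

/-- The box `Λ_a`. -/
def Lam (a : ℤ) : Set V := Lam2 a a

def leftSide (a b : ℤ) : Set V := {v | v.1 = -a ∧ |v.2| ≤ b}
def rightSide (a b : ℤ) : Set V := {v | v.1 = a ∧ |v.2| ≤ b}
def topSide (a b : ℤ) : Set V := {v | |v.1| ≤ a ∧ v.2 = b}
def botSide (a b : ℤ) : Set V := {v | |v.1| ≤ a ∧ v.2 = -b}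

/-- Horizontal crossing of `Λ_{a,b}` by a `rel`-path of vertices satisfying `P`. -/
def HCross (rel : V → V → Prop) (a b : ℤ) (P : V → Prop) : Prop :=
  Connected rel {v | v ∈ Lam2 a b ∧ P v} (leftSide a b) (rightSide a b)

/-- Vertical crossing of `Λ_{a,b}` by a `rel`-path of vertices satisfying `P`. -/
def VCross (rel : V → V → Prop) (a b : ℤ) (P : V → Prop) : Prop :=
  Connected rel {v | v ∈ Lam2 a b ∧ P v} (topSide a b) (botSide a b)

/-- `F` is increasing with respect to the pointwise order on `D`. -/
def IncreasingOn (D : Set V) (F : (V → ℤ) → ℝ) : Prop :=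
  ∀ h h' : V → ℤ, (∀ v ∈ D, h v ≤ h' v) → F h ≤ F h'

/-- The even box `Λ_m^even`: everything inside or on the even `×`-circuit
surrounding the origin contained in `Λ_{m+1} ∖ Λ_{m-1}`. -/
def LamEven (m : ℤ) : Set V := Lam m ∪ {v | infNorm v = m + 1 ∧ IsEvenV v}

/-- A quad: a domain `D` together with an enumeration `p` of its boundary
`×`-circuit (closed: first vertex repeated at the end) and marked points
`a = p[0]`, `b = p[ib]`, `c = p[ic]`, `d = p[idx]` in cyclic order. -/
structure Quad where
  D : Set V
  p : List V
  hp : p ≠ []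
  hchain : List.Chain' xadj p
  hclosed : p.head hp = p.getLast hp
  hbd : {v | v ∈ p} = bdry D
  hfin : D.Finite
  ib : ℕ
  ic : ℕ
  idx : ℕ
  h0b : 0 < ib
  hbc : ib < ic
  hcd : ic < idx
  hdlen : idx + 1 < p.length

namespace Quad

def ptA (q : Quad) : V := q.p.head q.hp
def ptB (q : Quad) : V := q.p.getD q.ib ((0 : ℤ), (0 : ℤ))
def ptC (q : Quad) : V := q.p.getD q.ic ((0 : ℤ), (0 : ℤ))
def ptD (q : Quad) : V := q.p.getD q.idx ((0 : ℤ), (0 : ℤ))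

/-- The (closed) arc `[ab]` of the boundary of a quad. -/
def arcAB (q : Quad) : Set V := {v | v ∈ q.p.take (q.ib + 1)}

/-- The (closed) arc `[bc]` of the boundary of a quad. -/
def arcBC (q : Quad) : Set V := {v | v ∈ (q.p.drop q.ib).take (q.ic - q.ib + 1)}

/-- The (closed) arc `[cd]` of the boundary of a quad. -/
def arcCD (q : Quad) : Set V := {v | v ∈ (q.p.drop q.ic).take (q.idx - q.ic + 1)}

/-- The (closed) arc `[da]` of the boundary of a quad. -/
def arcDA (q : Quad) : Set V := {v | v ∈ q.p.drop q.idx}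

/-- The open arc `(bc)` (excluding the endpoints `b` and `c`). -/
def openBC (q : Quad) : Set V :=
  {v | v ∈ (((q.p.drop q.ib).take (q.ic - q.ib + 1)).drop 1).dropLast}

/-- The open arc `(da)` (excluding the endpoints `d` and `a`). -/
def openDA (q : Quad) : Set V := {v | v ∈ ((q.p.drop q.idx).drop 1).dropLast}

end Quad


section FKGAux

section Abstract

variable {W : Type*}

/-- Reachability through a set of (undirected) edges. -/
def Reach (E : Set (W × W)) : W → W → Prop :=
  Relation.ReflTransGen (fun a b => (a, b) ∈ E ∨ (b, a) ∈ E)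

lemma reach_refl (E : Set (W × W)) (a : W) : Reach E a a := Relation.ReflTransGen.refl

lemma reach_symm {E : Set (W × W)} : Symmetric (Reach E) :=
  fun _ _ h => (@Relation.ReflTransGen.stdSymm _ _ ⟨fun _ _ h => h.symm⟩).symm _ _ h

lemma reach_trans {E : Set (W × W)} {a b c : W} (h : Reach E a b) (h' : Reach E b c) :
    Reach E a c := Relation.ReflTransGen.trans h h'

lemma reach_mono {E F : Set (W × W)} (hEF : E ⊆ F) {a b : W} (h : Reach E a b) :
    Reach F a b := by
  induction h with
  | refl => exact reach_refl _ _
  | tail _ hstep ih => exact ih.tail (hstep.imp (@hEF _) (@hEF _))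

lemma reach_single {E : Set (W × W)} {a b : W} (h : (a, b) ∈ E) : Reach E a b :=
  Relation.ReflTransGen.single (Or.inl h)

/-- The setoid of connected components. -/
def reachSetoid (E : Set (W × W)) : Setoid W :=
  ⟨Reach E, ⟨reach_refl E, fun h => reach_symm h, reach_trans⟩⟩

/-- The number of connected components of `(W, E)`. -/
noncomputable def ncomps (E : Set (W × W)) : ℕ := Nat.card (Quotient (reachSetoid E))

/-- Canonical surjection between component quotients for `E ⊆ F`. -/
noncomputable def qmap {E F : Set (W × W)} (hEF : E ⊆ F) :
    Quotient (reachSetoid E) → Quotient (reachSetoid F) :=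
  Quotient.map id (fun _ _ h => reach_mono hEF h)

lemma qmap_mk {E F : Set (W × W)} (hEF : E ⊆ F) (a : W) :
    qmap hEF (Quotient.mk _ a) = Quotient.mk _ a := rfl

lemma qmap_surjective {E F : Set (W × W)} (hEF : E ⊆ F) : Function.Surjective (qmap hEF) := by
  intro q
  obtain ⟨a, rfl⟩ := Quotient.exists_rep q
  exact ⟨Quotient.mk _ a, rfl⟩

lemma reach_insert_cases {E : Set (W × W)} {x y u v : W}
    (h : Reach (insert (x, y) E) u v) :
    Reach E u v ∨ ((Reach E u x ∨ Reach E u y) ∧ (Reach E x v ∨ Reach E y v)) := by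
  induction h with
  | refl => exact Or.inl (reach_refl _ _)
  | @tail b c _ hstep ih =>
    rcases hstep with hbc | hcb
    · rcases hbc with heq | hbc
      · -- (b, c) = (x, y)
        have hb : b = x := congrArg Prod.fst heq
        have hc : c = y := congrArg Prod.snd heq
        subst hb; subst hc
        rcases ih with h1 | ⟨h1, h2⟩
        · exact Or.inr ⟨Or.inl h1, Or.inr (reach_refl _ _)⟩
        · exact Or.inr ⟨h1, Or.inr (reach_refl _ _)⟩
      · have hbc' : Reach E b c := reach_single hbc
        rcases ih with h1 | ⟨h1, h2⟩
        · exact Or.inl (h1.trans hbc')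
        · exact Or.inr ⟨h1, (h2.imp (fun h => h.trans hbc') (fun h => h.trans hbc'))⟩
    · rcases hcb with heq | hcb
      · have hc : c = x := congrArg Prod.fst heq
        have hb : b = y := congrArg Prod.snd heq
        subst hb; subst hc
        rcases ih with h1 | ⟨h1, h2⟩
        · exact Or.inr ⟨Or.inr h1, Or.inl (reach_refl _ _)⟩
        · exact Or.inr ⟨h1, Or.inl (reach_refl _ _)⟩
      · have hbc' : Reach E b c := reach_symm (reach_single hcb)
        rcases ih with h1 | ⟨h1, h2⟩
        · exact Or.inl (h1.trans hbc')
        · exact Or.inr ⟨h1, (h2.imp (fun h => h.trans hbc') (fun h => h.trans hbc'))⟩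

lemma reach_insert_of_reach {E : Set (W × W)} {x y u v : W} (hxy : Reach E x y)
    (h : Reach (insert (x, y) E) u v) : Reach E u v := by
  rcases reach_insert_cases h with h1 | ⟨h1, h2⟩
  · exact h1
  · have hux : Reach E u x := by
      rcases h1 with h1 | h1
      · exact h1
      · exact h1.trans (reach_symm hxy)
    have hxv : Reach E x v := by
      rcases h2 with h2 | h2
      · exact h2
      · exact hxy.trans h2
    exact hux.trans hxv

/-- Adding an edge within a component does not change the components. -/
lemma ncomps_insert_of_reach [Finite W] {E : Set (W × W)} {x y : W} (hxy : Reach E x y) :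
    ncomps (insert (x, y) E) = ncomps E := by
  have hsub : E ⊆ insert (x, y) E := Set.subset_insert _ _
  have hbij : Function.Bijective (qmap hsub) := by
    constructor
    · intro q1 q2 h
      obtain ⟨a, rfl⟩ := Quotient.exists_rep q1
      obtain ⟨b, rfl⟩ := Quotient.exists_rep q2
      rw [qmap_mk, qmap_mk] at h
      have := Quotient.exact h
      exact Quotient.sound (reach_insert_of_reach hxy this)
    · exact qmap_surjective hsub
  exact (Nat.card_eq_of_bijective _ hbij).symm

/-- Adding one edge decreases the number of components by at most one. -/
lemma le_ncomps_insert [Finite W] (E : Set (W × W)) (x y : W) :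
    ncomps E ≤ ncomps (insert (x, y) E) + 1 := by
  classical
  have hsub : E ⊆ insert (x, y) E := Set.subset_insert _ _
  set φ : Quotient (reachSetoid E) → Quotient (reachSetoid (insert (x, y) E)) ⊕ Unit :=
    fun q => if q = Quotient.mk _ x then Sum.inr () else Sum.inl (qmap hsub q) with hφ
  have hinj : Function.Injective φ := by
    intro q1 q2 h
    obtain ⟨a, rfl⟩ := Quotient.exists_rep q1
    obtain ⟨b, rfl⟩ := Quotient.exists_rep q2
    by_cases h1 : (Quotient.mk (reachSetoid E) a) = Quotient.mk _ x <;>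
      by_cases h2 : (Quotient.mk (reachSetoid E) b) = Quotient.mk _ x
    · rw [h1, h2]
    · rw [hφ] at h; simp only [if_pos h1, if_neg h2] at h; exact absurd h (by simp)
    · rw [hφ] at h; simp only [if_pos h2, if_neg h1] at h; exact absurd h (by simp)
    · rw [hφ] at h; simp only [if_neg h1, if_neg h2, Sum.inl.injEq, qmap_mk] at h
      have hab := Quotient.exact h
      rcases reach_insert_cases hab with hr | ⟨hr1, hr2⟩
      · exact Quotient.sound hr
      · have ha : Reach E a y := by
          rcases hr1 with hr1 | hr1
          · exact absurd (Quotient.sound hr1) h1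
          · exact hr1
        have hb : Reach E y b := by
          rcases hr2 with hr2 | hr2
          · exact absurd (Quotient.sound (reach_symm hr2)) h2
          · exact hr2
        exact Quotient.sound (ha.trans hb)
  calc ncomps E ≤ Nat.card (Quotient (reachSetoid (insert (x, y) E)) ⊕ Unit) :=
        Nat.card_le_card_of_injective φ hinj
    _ = ncomps (insert (x, y) E) + 1 := by rw [Nat.card_sum]; simp [ncomps]

/-- Adding an edge between distinct components strictly decreases the count. -/
lemma ncomps_insert_lt [Finite W] {E : Set (W × W)} {x y : W} (hxy : ¬ Reach E x y) :
    ncomps (insert (x, y) E) < ncomps E := by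
  classical
  have hsub : E ⊆ insert (x, y) E := Set.subset_insert _ _
  have := Fintype.ofFinite W
  have : Fintype (Quotient (reachSetoid E)) := Quotient.fintype _
  have : Fintype (Quotient (reachSetoid (insert (x, y) E))) := Quotient.fintype _
  rw [ncomps, ncomps, Nat.card_eq_fintype_card, Nat.card_eq_fintype_card]
  refine Fintype.card_lt_of_surjective_not_injective (qmap hsub) (qmap_surjective hsub) ?_
  intro hinj
  have : qmap hsub (Quotient.mk _ x) = qmap hsub (Quotient.mk _ y) := by
    rw [qmap_mk, qmap_mk]
    exact Quotient.sound (reach_single (Set.mem_insert _ _))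
  exact hxy (Quotient.exact (hinj this))

lemma ncomps_one_step [Finite W] {E' E : Set (W × W)} (hEE : E' ⊆ E) (x y : W) :
    ncomps E + ncomps (insert (x, y) E') ≤ ncomps (insert (x, y) E) + ncomps E' := by
  by_cases h : Reach E' x y
  · rw [ncomps_insert_of_reach h, ncomps_insert_of_reach (reach_mono hEE h)]
  · have h1 : ncomps (insert (x, y) E') < ncomps E' := ncomps_insert_lt h
    have h2 : ncomps E ≤ ncomps (insert (x, y) E) + 1 := le_ncomps_insert E x y
    omega

lemma ncomps_sm_aux [Finite W] (G : Finset (W × W)) :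
    ∀ E' E : Set (W × W), E' ⊆ E →
      ncomps E + ncomps (E' ∪ ↑G) ≤ ncomps (E ∪ ↑G) + ncomps E' := by
  classical
  induction G using Finset.induction with
  | empty => intro E' E h; simp
  | @insert e G he ih =>
    intro E' E hEE
    obtain ⟨x, y⟩ := e
    have h1 : (E' ∪ ↑(insert (x, y) G) : Set (W × W)) = insert (x, y) E' ∪ ↑G := by
      push_cast
      rw [Set.union_insert, Set.insert_union]
    have h2 : (E ∪ ↑(insert (x, y) G) : Set (W × W)) = insert (x, y) E ∪ ↑G := by
      push_cast
      rw [Set.union_insert, Set.insert_union]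
    rw [h1, h2]
    have ih' := ih (insert (x, y) E') (insert (x, y) E) (Set.insert_subset_insert hEE)
    have hstep := ncomps_one_step hEE x y
    omega

/-- Supermodularity of the component count. -/
theorem ncomps_supermodular [Finite W] (E F : Set (W × W)) :
    ncomps E + ncomps F ≤ ncomps (E ∩ F) + ncomps (E ∪ F) := by
  classical
  have := Fintype.ofFinite W
  have hfin : (F \ E).Finite := Set.toFinite _
  have h := ncomps_sm_aux hfin.toFinset (E ∩ F) E Set.inter_subset_left
  rw [Set.Finite.coe_toFinset] at h
  have h1 : E ∩ F ∪ F \ E = F := by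
    ext e; by_cases he : e ∈ E <;> simp [he]
  have h2 : E ∪ F \ E = E ∪ F := by
    ext e; by_cases he : e ∈ E <;> simp [he]
  rw [h1, h2] at h
  omega

end Abstract


lemma adj_symm {u v : V} (h : adj u v) : adj v u := by
  unfold adj at *; omega

def Step (X : Set V) (a b : V) : Prop := a ∈ X ∧ b ∈ X ∧ adj a b

lemma step_symm {X : Set V} : Symmetric (Step X) := fun _ _ h => ⟨h.2.1, h.1, adj_symm h.2.2⟩

def ConnIn (X : Set V) (u v : V) : Prop := u ∈ X ∧ Relation.ReflTransGen (Step X) u v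

lemma ConnIn.mem_left {X : Set V} {u v : V} (h : ConnIn X u v) : u ∈ X := h.1

lemma ConnIn.mem_right {X : Set V} {u v : V} (h : ConnIn X u v) : v ∈ X := by
  rcases h with ⟨hu, h⟩
  induction h with
  | refl => exact hu
  | tail _ hstep _ => exact hstep.2.1

lemma ConnIn.refl {X : Set V} {u : V} (h : u ∈ X) : ConnIn X u u :=
  ⟨h, Relation.ReflTransGen.refl⟩

lemma ConnIn.symm {X : Set V} {u v : V} (h : ConnIn X u v) : ConnIn X v u :=
  ⟨h.mem_right, ((@Relation.ReflTransGen.stdSymm _ _ ⟨fun _ _ h => step_symm h⟩).symm _ _ h.2)⟩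

lemma ConnIn.trans {X : Set V} {u v w : V} (h : ConnIn X u v) (h' : ConnIn X v w) :
    ConnIn X u w := ⟨h.1, h.2.trans h'.2⟩

lemma ConnIn.single {X : Set V} {u v : V} (h : Step X u v) : ConnIn X u v :=
  ⟨h.1, Relation.ReflTransGen.single h⟩

/-- The setoid of connected components of `X`. -/
def connSetoid (X : Set V) : Setoid ↥X :=
  ⟨fun u v => ConnIn X ↑u ↑v,
    ⟨fun u => ConnIn.refl u.2, fun h => h.symm, fun h h' => h.trans h'⟩⟩

/-- `v` lies in a component of `X` avoiding `P`. -/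
def FreeAt (X P : Set V) (v : V) : Prop := v ∈ X ∧ ∀ u, ConnIn X v u → u ∉ P

/-- The free components of `X` (those avoiding `P`). -/
def FreeQ (X P : Set V) : Set (Quotient (connSetoid X)) :=
  {q | ∀ v : ↥X, Quotient.mk _ v = q → ↑v ∉ P}

lemma freeAt_of_conn {X P : Set V} {u v : V} (h : ConnIn X u v) (hu : FreeAt X P u) :
    FreeAt X P v := ⟨h.mem_right, fun w hw => hu.2 w (h.trans hw)⟩

lemma freeQ_mk {X P : Set V} {v : ↥X} (h : FreeAt X P ↑v) :
    (Quotient.mk (connSetoid X) v : Quotient (connSetoid X)) ∈ FreeQ X P := by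
  intro u hu
  exact (freeAt_of_conn ((Quotient.exact hu : ConnIn X _ _).symm) h).2 _ (ConnIn.refl u.2)

lemma freeAt_of_mk_mem {X P : Set V} {v : ↥X}
    (h : (Quotient.mk (connSetoid X) v : Quotient (connSetoid X)) ∈ FreeQ X P) :
    FreeAt X P ↑v := by
  refine ⟨v.2, fun u hu => ?_⟩
  have hu' : u ∈ X := hu.mem_right
  exact h ⟨u, hu'⟩ (Quotient.sound (hu.symm : ConnIn X _ _))

/- ### Sign assignments -/

/-- Admissible sign assignments on `X` (locally constant, `+1` on components meeting `P`,
normalised to `1` off `X`). -/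
def SgnSet (X P : Set V) : Set (V → ℤ) :=
  {s | (∀ v, v ∉ X → s v = 1) ∧ (∀ v, s v = 1 ∨ s v = -1) ∧
    (∀ u v, ConnIn X u v → s u = s v) ∧
    (∀ v, v ∈ X → ¬ FreeAt X P v → s v = 1)}

variable {X P : Set V}

lemma freeQ_mk' {v : V} (h : FreeAt X P v) :
    (Quotient.mk (connSetoid X) (⟨v, h.1⟩ : ↥X)) ∈ FreeQ X P := freeQ_mk h

open Classical in
/-- The sign function associated to a choice of signs on free components. -/
noncomputable def sgnOf (σ : ↥(FreeQ X P) → Bool) : V → ℤ := fun v =>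
  if h : FreeAt X P v then
    (if σ ⟨Quotient.mk (connSetoid X) (⟨v, h.1⟩ : ↥X), freeQ_mk' h⟩ then 1 else -1) else 1

lemma sgnOf_neg {σ : ↥(FreeQ X P) → Bool} {v : V} (h : ¬ FreeAt X P v) : sgnOf σ v = 1 := by
  unfold sgnOf; rw [dif_neg h]

lemma sgnOf_pos {σ : ↥(FreeQ X P) → Bool} {v : V} (h : FreeAt X P v) :
    sgnOf σ v = if σ ⟨Quotient.mk (connSetoid X) (⟨v, h.1⟩ : ↥X), freeQ_mk' h⟩ then 1 else -1 := by
  unfold sgnOf; rw [dif_pos h]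

lemma sgn_congr (σ : ↥(FreeQ X P) → Bool) {a b : ↥(FreeQ X P)} (h : a.1 = b.1) : σ a = σ b := by
  cases a; cases b; cases h; rfl

/-- The value of a sign on a given component. -/
def valOn (s : ↥(SgnSet X P)) : Quotient (connSetoid X) → Bool :=
  Quotient.lift (fun v : ↥X => decide ((s : V → ℤ) ↑v = 1))
    (fun u v huv => by have := s.2.2.2.1 ↑u ↑v huv; simp [this])

lemma valOn_mk (s : ↥(SgnSet X P)) (v : ↥X) :
    valOn s (Quotient.mk _ v) = decide ((s : V → ℤ) ↑v = 1) := rfl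

lemma sgnOf_mem (σ : ↥(FreeQ X P) → Bool) : sgnOf σ ∈ SgnSet X P := by
  refine ⟨fun v hv => sgnOf_neg (fun h => hv h.1), ?_, ?_, fun v _ hv => sgnOf_neg hv⟩
  · intro v
    by_cases h : FreeAt X P v
    · rw [sgnOf_pos h]
      by_cases hb : σ ⟨Quotient.mk (connSetoid X) (⟨v, h.1⟩ : ↥X), freeQ_mk' h⟩ <;> simp [hb]
    · rw [sgnOf_neg h]; left; rfl
  · intro u v huv
    by_cases h : FreeAt X P u
    · have h' : FreeAt X P v := freeAt_of_conn huv h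
      rw [sgnOf_pos h, sgnOf_pos h']
      have : σ ⟨Quotient.mk (connSetoid X) (⟨u, h.1⟩ : ↥X), freeQ_mk' h⟩ =
          σ ⟨Quotient.mk (connSetoid X) (⟨v, h'.1⟩ : ↥X), freeQ_mk' h'⟩ :=
        sgn_congr σ (Quotient.sound (huv : ConnIn X _ _))
      rw [this]
    · have h' : ¬ FreeAt X P v := fun hv => h (freeAt_of_conn huv.symm hv)
      rw [sgnOf_neg h, sgnOf_neg h']

/-- Sign assignments are parametrised by `±1` choices on free components. -/
noncomputable def sgnEquiv : ↥(SgnSet X P) ≃ (↥(FreeQ X P) → Bool) where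
  toFun s q := valOn s q.1
  invFun σ := ⟨sgnOf σ, sgnOf_mem σ⟩
  left_inv s := by
    apply Subtype.ext
    funext v
    show sgnOf (P := P) (fun q => valOn s q.1) v = (s : V → ℤ) v
    by_cases h : FreeAt X P v
    · rw [sgnOf_pos h]
      have hval : valOn s (Quotient.mk (connSetoid X) (⟨v, h.1⟩ : ↥X)) =
          decide ((s : V → ℤ) v = 1) := rfl
      rw [hval]
      rcases s.2.2.1 v with h1 | h1 <;> rw [h1] <;> simp
    · rw [sgnOf_neg h]
      by_cases hv : v ∈ X
      · exact (s.2.2.2.2 v hv h).symm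
      · exact (s.2.1 v hv).symm
  right_inv σ := by
    funext q
    obtain ⟨q, hq⟩ := q
    induction q using Quotient.ind with
    | _ v =>
      have hfree : FreeAt X P ↑v := freeAt_of_mk_mem hq
      show valOn ⟨sgnOf σ, sgnOf_mem σ⟩ (Quotient.mk _ v) = _
      rw [valOn_mk]
      show decide (sgnOf σ ↑v = 1) = _
      have hval : sgnOf σ ↑v = if σ ⟨Quotient.mk (connSetoid X) v, hq⟩ then 1 else -1 := by
        rw [sgnOf_pos hfree]
      rw [hval]
      by_cases hb : σ ⟨Quotient.mk (connSetoid X) v, hq⟩ <;> simp [hb]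

lemma card_sgnSet (hX : X.Finite) :
    Nat.card ↥(SgnSet X P) = 2 ^ Nat.card ↥(FreeQ X P) := by
  have : Finite ↥X := hX.to_subtype
  have : Finite (Quotient (connSetoid X)) := Quotient.finite _
  have : Finite ↥(FreeQ X P) := Subtype.finite
  rw [Nat.card_congr (sgnEquiv (X := X) (P := P)), Nat.card_fun]
  congr 1
  simp [Nat.card_eq_fintype_card]


section Bridge

variable (X P D : Set V) (star : V)

/-- Edges of `X`, together with ghost edges from `X ∩ P` to `star`. -/
def edgesOf : Set (↥(insert star D) × ↥(insert star D)) :=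
  {e | Step X ↑e.1 ↑e.2 ∨ ((e.1 : V) ∈ X ∧ (e.1 : V) ∈ P ∧ (e.2 : V) = star)}

/-- A vertex whose component meets `P` (or the ghost vertex). -/
def Bad (z : V) : Prop := z = star ∨ ∃ p, ConnIn X z p ∧ p ∈ P

variable {X P D star}

lemma bad_of_conn {b c : V} (h : ConnIn X b c) (hb : Bad X P star b) (hstar : star ∉ X) :
    Bad X P star c := by
  rcases hb with rfl | ⟨p, hp, hpP⟩
  · exact absurd h.mem_left hstar
  · exact Or.inr ⟨p, h.symm.trans hp, hpP⟩

lemma reach_char (hXD : X ⊆ D) (hstar : star ∉ D) {u v : ↥(insert star D)}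
    (h : Reach (edgesOf X P D star) u v) :
    ConnIn X ↑u ↑v ∨ (u : V) = ↑v ∨ (Bad X P star ↑u ∧ Bad X P star ↑v) := by
  have hstarX : star ∉ X := fun hx => hstar (hXD hx)
  induction h with
  | refl => exact Or.inr (Or.inl rfl)
  | @tail b c _ hstep ih =>
    have hbc : ConnIn X ↑b ↑c ∨ (Bad X P star ↑b ∧ Bad X P star ↑c) := by
      rcases hstep with h' | h'
      · rcases h' with h' | ⟨h1, h2, h3⟩
        · exact Or.inl (ConnIn.single h')
        · exact Or.inr ⟨Or.inr ⟨↑b, ConnIn.refl h1, h2⟩, Or.inl h3⟩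
      · rcases h' with h' | ⟨h1, h2, h3⟩
        · exact Or.inl (ConnIn.single h').symm
        · exact Or.inr ⟨Or.inl h3, Or.inr ⟨↑c, ConnIn.refl h1, h2⟩⟩
    rcases ih with ih | ih | ih
    · rcases hbc with hbc | hbc
      · exact Or.inl (ih.trans hbc)
      · exact Or.inr (Or.inr ⟨bad_of_conn ih.symm hbc.1 hstarX, hbc.2⟩)
    · rcases hbc with hbc | hbc
      · exact Or.inl (by rw [ih] at *; exact hbc)
      · exact Or.inr (Or.inr ⟨by rw [ih]; exact hbc.1, hbc.2⟩)
    · rcases hbc with hbc | hbc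
      · exact Or.inr (Or.inr ⟨ih.1, bad_of_conn hbc ih.2 hstarX⟩)
      · exact Or.inr (Or.inr ⟨ih.1, hbc.2⟩)

lemma reach_of_connIn_aux (hXD : X ⊆ D) {u v : V}
    (h : Relation.ReflTransGen (Step X) u v) :
    ∀ (hu : u ∈ insert star D) (hv : v ∈ insert star D),
      Reach (edgesOf X P D star) ⟨u, hu⟩ ⟨v, hv⟩ := by
  induction h with
  | refl => intro hu hv; exact reach_refl _ _
  | @tail b c _ hstep ih =>
    intro hu hv
    have hb : b ∈ insert star D := Set.mem_insert_of_mem _ (hXD hstep.1)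
    exact (ih hu hb).tail (Or.inl (Or.inl ⟨hstep.1, hstep.2.1, hstep.2.2⟩))

lemma reach_of_connIn (hXD : X ⊆ D) {u v : V} (h : ConnIn X u v)
    (hu : u ∈ insert star D) (hv : v ∈ insert star D) :
    Reach (edgesOf X P D star) ⟨u, hu⟩ ⟨v, hv⟩ :=
  reach_of_connIn_aux hXD h.2 hu hv

lemma reach_star_of_bad (hXD : X ⊆ D) {u : V} (hu : u ∈ insert star D)
    (h : Bad X P star u) :
    Reach (edgesOf X P D star) ⟨u, hu⟩ ⟨star, Set.mem_insert _ _⟩ := by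
  rcases h with rfl | ⟨p, hp, hpP⟩
  · exact reach_refl _ _
  · have hpD : p ∈ insert star D := Set.mem_insert_of_mem _ (hXD hp.mem_right)
    exact (reach_of_connIn hXD hp hu hpD).tail
      (Or.inl (Or.inr ⟨hp.mem_right, hpP, rfl⟩))

open Classical in
/-- The component count of the bridge graph. -/
lemma ncomps_edgesOf (hD : D.Finite) (hXD : X ⊆ D) (hstar : star ∉ D) :
    ncomps (edgesOf X P D star) = Nat.card ↥(FreeQ X P) + (D \ X).ncard + 1 := by
  have hXfin : X.Finite := hD.subset hXD
  have : Finite ↥X := hXfin.to_subtype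
  have : Finite (Quotient (connSetoid X)) := Quotient.finite _
  have : Finite ↥(FreeQ X P) := Subtype.finite
  have : Finite ↥(insert star D) := (hD.insert star).to_subtype
  have : Finite ↥(D \ X) := (hD.subset Set.diff_subset).to_subtype
  have hstarX : star ∉ X := fun hx => hstar (hXD hx)
  set E := edgesOf X P D star with hE
  set ψ : Option (↥(FreeQ X P) ⊕ ↥(D \ X)) → Quotient (reachSetoid E) := fun o =>
    match o with
    | none => Quotient.mk _ ⟨star, Set.mem_insert _ _⟩
    | some (Sum.inl q) => Quotient.liftOn q.1
        (fun v : ↥X => Quotient.mk (reachSetoid E)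
          (⟨↑v, Set.mem_insert_of_mem _ (hXD v.2)⟩ : ↥(insert star D)))
        (fun u v huv => Quotient.sound (reach_of_connIn hXD huv _ _))
    | some (Sum.inr d) => Quotient.mk _ ⟨↑d, Set.mem_insert_of_mem _ d.2.1⟩
    with hψ
  have hfree_not_bad : ∀ (v : ↥X), FreeAt X P ↑v → ¬ Bad X P star ↑v := by
    rintro v hf (h | ⟨p, hp, hpP⟩)
    · exact hstarX (h ▸ v.2)
    · exact hf.2 p hp hpP
  have hbij : Function.Bijective ψ := by
    constructor
    · rintro (_ | ⟨q | d⟩) (_ | ⟨q' | d'⟩) h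
      · rfl
      · exfalso
        obtain ⟨q', hq'⟩ := q'
        induction q' using Quotient.ind with
        | _ v =>
          have hr := Quotient.exact h.symm
          rcases reach_char hXD hstar hr with hc | hc | hc
          · exact hstarX (ConnIn.mem_right (show ConnIn X (↑v : V) star from hc))
          · exact hstarX ((show (↑v : V) = star from hc) ▸ v.2)
          · exact hfree_not_bad v (freeAt_of_mk_mem hq') (show Bad X P star ↑v from hc.1)
      · exfalso
        have hr := Quotient.exact h.symm
        rcases reach_char hXD hstar hr with hc | hc | hc
        · exact d'.2.2 (ConnIn.mem_left (show ConnIn X (↑d' : V) star from hc))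
        · exact hstar ((show (↑d' : V) = star from hc) ▸ d'.2.1)
        · rcases (show Bad X P star (↑d' : V) from hc.1) with h' | ⟨p, hp, _⟩
          · exact hstar (h' ▸ d'.2.1)
          · exact d'.2.2 hp.mem_left
      · exfalso
        obtain ⟨q, hq⟩ := q
        induction q using Quotient.ind with
        | _ v =>
          have hr := Quotient.exact h
          rcases reach_char hXD hstar hr with hc | hc | hc
          · exact hstarX (ConnIn.mem_right (show ConnIn X (↑v : V) star from hc))
          · exact hstarX ((show (↑v : V) = star from hc) ▸ v.2)
          · exact hfree_not_bad v (freeAt_of_mk_mem hq) hc.1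
      · obtain ⟨q, hq⟩ := q
        obtain ⟨q', hq'⟩ := q'
        induction q using Quotient.ind with
        | _ v =>
          induction q' using Quotient.ind with
          | _ w =>
            have hr := Quotient.exact h
            rcases reach_char hXD hstar hr with hc | hc | hc
            · exact congrArg (Option.some ∘ Sum.inl)
                (Subtype.ext (Quotient.sound (hc : ConnIn X _ _)))
            · exact congrArg (Option.some ∘ Sum.inl)
                (Subtype.ext (congrArg (Quotient.mk _)
                  (Subtype.ext (show (↑v : V) = ↑w from hc))))
            · exact absurd hc.1 (hfree_not_bad v (freeAt_of_mk_mem hq))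
      · exfalso
        obtain ⟨q, hq⟩ := q
        induction q using Quotient.ind with
        | _ v =>
          have hr := Quotient.exact h
          rcases reach_char hXD hstar hr with hc | hc | hc
          · exact d'.2.2 hc.mem_right
          · exact d'.2.2 ((show (↑v : V) = ↑d' from hc) ▸ v.2)
          · exact absurd hc.1 (hfree_not_bad v (freeAt_of_mk_mem hq))
      · exfalso
        have hr := Quotient.exact h
        rcases reach_char hXD hstar hr with hc | hc | hc
        · exact d.2.2 hc.mem_left
        · exact hstar ((show (↑d : V) = star from hc) ▸ d.2.1)
        · rcases hc.1 with h' | ⟨p, hp, _⟩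
          · exact hstar (h' ▸ d.2.1)
          · exact d.2.2 hp.mem_left
      · exfalso
        obtain ⟨q', hq'⟩ := q'
        induction q' using Quotient.ind with
        | _ v =>
          have hr := Quotient.exact h
          rcases reach_char hXD hstar hr with hc | hc | hc
          · exact d.2.2 hc.mem_left
          · exact d.2.2 ((show (↑v : V) = ↑d from hc.symm).symm ▸ v.2)
          · exact absurd hc.2 (hfree_not_bad v (freeAt_of_mk_mem hq'))
      · have hr := Quotient.exact h
        rcases reach_char hXD hstar hr with hc | hc | hc
        · exact absurd hc.mem_left d.2.2
        · exact congrArg (Option.some ∘ Sum.inr) (Subtype.ext (show (↑d : V) = ↑d' from hc))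
        · rcases hc.1 with h' | ⟨p, hp, _⟩
          · exact absurd (h' ▸ d.2.1) hstar
          · exact absurd hp.mem_left d.2.2
    · intro c
      obtain ⟨⟨z, hz⟩, rfl⟩ := Quotient.exists_rep c
      rcases Set.mem_insert_iff.mp hz with rfl | hzD
      · exact ⟨none, rfl⟩
      · by_cases hzX : z ∈ X
        · by_cases hf : FreeAt X P z
          · refine ⟨some (Sum.inl ⟨Quotient.mk _ (⟨z, hzX⟩ : ↥X), freeQ_mk hf⟩), rfl⟩
          · refine ⟨none, ?_⟩
            have hbad : Bad X P star z := by
              simp only [FreeAt, not_and, not_forall] at hf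
              obtain ⟨u, hu, hP⟩ := hf hzX
              exact Or.inr ⟨u, hu, not_not.mp hP⟩
            exact Quotient.sound (reach_symm (reach_star_of_bad hXD hz hbad))
        · exact ⟨some (Sum.inr ⟨z, ⟨hzD, hzX⟩⟩), rfl⟩
  have hcard := Nat.card_eq_of_bijective ψ hbij
  rw [ncomps, ← hcard, Nat.card_congr (Equiv.optionEquivSumPUnit.{0, 0} _), Nat.card_sum,
    Nat.card_sum]
  simp [Nat.card_coe_set_eq]

end Bridge

/-- Key inequality: supermodularity of the number of free components. -/
theorem freeQ_card_ineq (D P A B : Set V) (hD : D.Finite) (hA : A ⊆ D) (hB : B ⊆ D)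
    (hAB : ∀ x y, adj x y → x ∈ A → y ∈ B → x ∈ B ∨ y ∈ A) :
    Nat.card ↥(FreeQ A P) + Nat.card ↥(FreeQ B P) ≤
      Nat.card ↥(FreeQ (A ∩ B) P) + Nat.card ↥(FreeQ (A ∪ B) P) := by
  obtain ⟨star, hstar⟩ := hD.infinite_compl.nonempty
  rw [Set.mem_compl_iff] at hstar
  have : Finite ↥(insert star D) := (hD.insert star).to_subtype
  have hiA : A ∩ B ⊆ D := fun x hx => hA hx.1
  have hiU : A ∪ B ⊆ D := Set.union_subset hA hB
  -- edge-set identities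
  have hInter : edgesOf (A ∩ B) P D star = edgesOf A P D star ∩ edgesOf B P D star := by
    ext e
    constructor
    · rintro (⟨⟨h1A, h1B⟩, ⟨h2A, h2B⟩, hadj⟩ | ⟨⟨h1A, h1B⟩, hP, hst⟩)
      · exact ⟨Or.inl ⟨h1A, h2A, hadj⟩, Or.inl ⟨h1B, h2B, hadj⟩⟩
      · exact ⟨Or.inr ⟨h1A, hP, hst⟩, Or.inr ⟨h1B, hP, hst⟩⟩
    · rintro ⟨hA' | hA', hB' | hB'⟩
      · exact Or.inl ⟨⟨hA'.1, hB'.1⟩, ⟨hA'.2.1, hB'.2.1⟩, hA'.2.2⟩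
      · exact absurd (hB'.2.2 ▸ hA (hA'.2.1)) hstar
      · exact absurd (hA'.2.2 ▸ hB (hB'.2.1)) hstar
      · exact Or.inr ⟨⟨hA'.1, hB'.1⟩, hA'.2.1, hA'.2.2⟩
  have hUnion : edgesOf (A ∪ B) P D star = edgesOf A P D star ∪ edgesOf B P D star := by
    ext e
    constructor
    · rintro (⟨h1, h2, hadj⟩ | ⟨h1, hP, hst⟩)
      · rcases h1 with h1 | h1 <;> rcases h2 with h2 | h2
        · exact Or.inl (Or.inl ⟨h1, h2, hadj⟩)
        · rcases hAB _ _ hadj h1 h2 with h | h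
          · exact Or.inr (Or.inl ⟨h, h2, hadj⟩)
          · exact Or.inl (Or.inl ⟨h1, h, hadj⟩)
        · rcases hAB _ _ (adj_symm hadj) h2 h1 with h | h
          · exact Or.inr (Or.inl ⟨h1, h, hadj⟩)
          · exact Or.inl (Or.inl ⟨h, h2, hadj⟩)
        · exact Or.inr (Or.inl ⟨h1, h2, hadj⟩)
      · rcases h1 with h1 | h1
        · exact Or.inl (Or.inr ⟨h1, hP, hst⟩)
        · exact Or.inr (Or.inr ⟨h1, hP, hst⟩)
    · rintro ((⟨h1, h2, hadj⟩ | ⟨h1, hP, hst⟩) | (⟨h1, h2, hadj⟩ | ⟨h1, hP, hst⟩))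
      · exact Or.inl ⟨Or.inl h1, Or.inl h2, hadj⟩
      · exact Or.inr ⟨Or.inl h1, hP, hst⟩
      · exact Or.inl ⟨Or.inr h1, Or.inr h2, hadj⟩
      · exact Or.inr ⟨Or.inr h1, hP, hst⟩
  have hsm := ncomps_supermodular (edgesOf A P D star) (edgesOf B P D star)
  rw [← hInter, ← hUnion] at hsm
  rw [ncomps_edgesOf hD hA hstar, ncomps_edgesOf hD hB hstar,
    ncomps_edgesOf hD hiA hstar, ncomps_edgesOf hD hiU hstar] at hsm
  have hAf : A.Finite := hD.subset hA
  have hBf : B.Finite := hD.subset hB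
  have h1 : (D \ A).ncard = D.ncard - A.ncard := Set.ncard_diff hA hAf
  have h2 : (D \ B).ncard = D.ncard - B.ncard := Set.ncard_diff hB hBf
  have h3 : (D \ (A ∩ B)).ncard = D.ncard - (A ∩ B).ncard :=
    Set.ncard_diff hiA (hAf.subset Set.inter_subset_left)
  have h4 : (D \ (A ∪ B)).ncard = D.ncard - (A ∪ B).ncard :=
    Set.ncard_diff hiU (hAf.union hBf)
  have h5 : (A ∩ B).ncard + (A ∪ B).ncard = A.ncard + B.ncard :=
    Set.ncard_inter_add_ncard_union A B hAf hBf
  have hle1 : A.ncard ≤ D.ncard := Set.ncard_le_ncard hA hD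
  have hle2 : B.ncard ≤ D.ncard := Set.ncard_le_ncard hB hD
  have hle3 : (A ∩ B).ncard ≤ D.ncard := Set.ncard_le_ncard hiA hD
  have hle4 : (A ∪ B).ncard ≤ D.ncard := Set.ncard_le_ncard hiU hD
  omega


end FKGAux

section HeightFns

variable {D B : Set V} {κ : V → Set ℤ} {Bpos Bsym : Set V}

/-- The support of a (nonnegative) function. -/
def suppOf (f : V → ℤ) : Set V := {v | f v ≠ 0}

lemma suppOf_subset {f : V → ℤ} (hf : IsHeightFn D f) : suppOf f ⊆ D := by
  intro v hv
  by_contra hvD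
  exact hv (hf.2.2 v hvD)

lemma abs_mem_homSet (hup : Bpos ∪ Bsym = B) (hposκ : ∀ v ∈ Bpos, κ v ⊆ {x : ℤ | 0 ≤ x})
    (hsymκ : ∀ v ∈ Bsym, κ v = (fun x : ℤ => -x) '' κ v)
    {h : V → ℤ} (hh : h ∈ HomSet D B κ) : (fun v => |h v|) ∈ HomSet D B κ := by
  obtain ⟨⟨hadj, hpar, hzero⟩, hbc⟩ := hh
  refine ⟨⟨?_, ?_, ?_⟩, ?_⟩
  · intro u v hu hv huv
    have := hadj u v hu hv huv
    show abs (|h u| - |h v|) = 1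
    simp only [Int.abs_eq_natAbs] at *
    omega
  · intro v hv
    obtain ⟨k, hk⟩ := hpar v hv
    show Even (|h v| + v.1 + v.2)
    rcases abs_cases (h v) with ⟨h', _⟩ | ⟨h', _⟩
    · rw [h']; exact ⟨k, hk⟩
    · rw [h']; exact ⟨k - h v, by omega⟩
  · intro v hv
    show |h v| = 0
    simp [hzero v hv]
  · intro v hv
    have hvB : h v ∈ κ v := hbc v hv
    rw [← hup] at hv
    show |h v| ∈ κ v
    rcases hv with hv | hv
    · have h0 : 0 ≤ h v := hposκ v hv hvB
      rwa [abs_of_nonneg h0]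
    · rcases abs_cases (h v) with ⟨h', _⟩ | ⟨h', _⟩
      · rwa [h']
      · rw [h', hsymκ v hv]
        exact ⟨h v, hvB, rfl⟩

lemma sign_const_on_conn {h : V → ℤ} (hh : IsHeightFn D h) {f : V → ℤ}
    (habs : ∀ v, |h v| = f v) {u v : V} (hc : ConnIn (suppOf f) u v) :
    ((h u < 0) ↔ (h v < 0)) := by
  obtain ⟨hu, hc⟩ := hc
  have hsub : suppOf f ⊆ D := by
    intro w hw
    by_contra hwD
    exact hw (by rw [← habs w, hh.2.2 w hwD]; rfl)
  induction hc with
  | refl => exact Iff.rfl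
  | @tail b c hab hstep ih =>
    refine ih.trans ?_
    have hb : h b ≠ 0 := fun h0 => hstep.1 (by rw [← habs b, h0]; rfl)
    have hcne : h c ≠ 0 := fun h0 => hstep.2.1 (by rw [← habs c, h0]; rfl)
    have hadj := hh.1 b c (hsub hstep.1) (hsub hstep.2.1) hstep.2.2
    simp only [Int.abs_eq_natAbs] at hadj
    omega

lemma fiber_card (hB : B ⊆ D) (hup : Bpos ∪ Bsym = B)
    (hposκ : ∀ v ∈ Bpos, κ v ⊆ {x : ℤ | 0 ≤ x})
    (hsymκ : ∀ v ∈ Bsym, κ v = (fun x : ℤ => -x) '' κ v)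
    {f : V → ℤ} (hfS : f ∈ HomSet D B κ) (hf0 : ∀ v, 0 ≤ f v) :
    Nat.card ↥{h | h ∈ HomSet D B κ ∧ (fun v => |h v|) = f} =
      Nat.card ↥(SgnSet (suppOf f) Bpos) := by
  classical
  apply Nat.card_congr
  have hsub : suppOf f ⊆ D := suppOf_subset hfS.1
  refine Equiv.ofBijective
    (fun h => ⟨fun v => if (h.1 : V → ℤ) v < 0 then -1 else 1, ?_, ?_, ?_, ?_⟩) ⟨?_, ?_⟩
  · -- off the support
    intro v hv
    show (if (h.1 : V → ℤ) v < 0 then (-1 : ℤ) else 1) = 1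
    have hv0 : (h.1 : V → ℤ) v = 0 := by
      have := congrFun h.2.2 v
      simp only [suppOf, Set.mem_setOf_eq, not_not] at hv
      exact abs_eq_zero.mp (by rw [this, hv])
    rw [if_neg (by omega)]
  · intro v
    show (if (h.1 : V → ℤ) v < 0 then (-1 : ℤ) else 1) = 1 ∨
      (if (h.1 : V → ℤ) v < 0 then (-1 : ℤ) else 1) = -1
    by_cases hv : (h.1 : V → ℤ) v < 0
    · rw [if_pos hv]; right; rfl
    · rw [if_neg hv]; left; rfl
  · intro u v huv
    show (if (h.1 : V → ℤ) u < 0 then (-1 : ℤ) else 1) =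
      (if (h.1 : V → ℤ) v < 0 then (-1 : ℤ) else 1)
    have hiff := sign_const_on_conn h.2.1.1 (fun v => congrFun h.2.2 v) huv
    exact if_congr hiff rfl rfl
  · intro v hvX hvF
    show (if (h.1 : V → ℤ) v < 0 then (-1 : ℤ) else 1) = 1
    have : ∃ p, ConnIn (suppOf f) v p ∧ p ∈ Bpos := by
      by_contra hcon
      push_neg at hcon
      exact hvF ⟨hvX, fun u hu hp => hcon u hu hp⟩
    obtain ⟨p, hconn, hpP⟩ := this
    have hiff := sign_const_on_conn h.2.1.1 (fun v => congrFun h.2.2 v) hconn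
    have hpB : p ∈ B := by rw [← hup]; exact Or.inl hpP
    have hp0 : 0 ≤ (h.1 : V → ℤ) p := hposκ p hpP (h.2.1.2 p hpB)
    rw [if_neg (by rw [hiff]; omega)]
  · -- injectivity
    intro h1 h2 heq
    apply Subtype.ext
    funext v
    have e1 : |(h1.1 : V → ℤ) v| = f v := congrFun h1.2.2 v
    have e2 : |(h2.1 : V → ℤ) v| = f v := congrFun h2.2.2 v
    have hthis : (if (h1.1 : V → ℤ) v < 0 then (-1 : ℤ) else 1) =
        (if (h2.1 : V → ℤ) v < 0 then (-1 : ℤ) else 1) :=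
      congrFun (congrArg Subtype.val heq) v
    have hsign : ((h1.1 : V → ℤ) v < 0) ↔ ((h2.1 : V → ℤ) v < 0) := by
      by_cases ha : (h1.1 : V → ℤ) v < 0 <;> by_cases hb : (h2.1 : V → ℤ) v < 0
      · exact iff_of_true ha hb
      · rw [if_pos ha, if_neg hb] at hthis; norm_num at hthis
      · rw [if_neg ha, if_pos hb] at hthis; norm_num at hthis
      · exact iff_of_false ha hb
    show (h1.1 : V → ℤ) v = (h2.1 : V → ℤ) v
    rcases abs_cases ((h1.1 : V → ℤ) v) with ⟨u1, s1⟩ | ⟨u1, s1⟩ <;>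
      rcases abs_cases ((h2.1 : V → ℤ) v) with ⟨u2, s2⟩ | ⟨u2, s2⟩ <;>
      rw [u1] at e1 <;> rw [u2] at e2
    · omega
    · exact absurd (hsign.mpr s2) (by omega)
    · exact absurd (hsign.mp s1) (by omega)
    · omega
  · -- surjectivity
    rintro ⟨s, hs1, hs2, hs3, hs4⟩
    have hmem : (fun v => s v * f v) ∈ HomSet D B κ ∧
        (fun v => |s v * f v|) = f := by
      have habs : ∀ v, |s v * f v| = f v := by
        intro v
        rcases hs2 v with h1 | h1 <;> rw [h1] <;>
          simp [abs_of_nonneg (hf0 v)]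
      refine ⟨⟨⟨?_, ?_, ?_⟩, ?_⟩, funext habs⟩
      · intro u v hu hv huv
        show |s u * f u - s v * f v| = 1
        have hadjf := hfS.1.1 u v hu hv huv
        by_cases hu0 : f u = 0
        · have hfv : f v = 1 := by
            have h0 := hf0 v
            simp only [Int.abs_eq_natAbs] at hadjf; omega
          rcases hs2 v with h1 | h1 <;> rw [hu0, h1, hfv] <;> norm_num
        · by_cases hv0 : f v = 0
          · have hfu : f u = 1 := by
              have h0 := hf0 u
              simp only [Int.abs_eq_natAbs] at hadjf; omega
            rcases hs2 u with h1 | h1 <;> rw [hv0, h1, hfu] <;> norm_num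
          · have hsuv : s u = s v := hs3 u v (ConnIn.single ⟨hu0, hv0, huv⟩)
            rcases hs2 u with h1 | h1
            · rw [← hsuv, h1]; simpa using hadjf
            · rw [← hsuv, h1]
              have : (-1 : ℤ) * f u - (-1) * f v = -(f u - f v) := by ring
              rw [this, abs_neg]; exact hadjf
      · intro v hv
        show Even (s v * f v + v.1 + v.2)
        obtain ⟨k, hk⟩ := hfS.1.2.1 v hv
        rcases hs2 v with h1 | h1
        · rw [h1]; exact ⟨k, by omega⟩
        · rw [h1]; exact ⟨k - f v, by omega⟩
      · intro v hv
        show s v * f v = 0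
        rw [hfS.1.2.2 v hv, mul_zero]
      · intro v hv
        show s v * f v ∈ κ v
        have hfv : f v ∈ κ v := hfS.2 v hv
        rcases (hup ▸ hv : v ∈ Bpos ∪ Bsym) with hv' | hv'
        · by_cases hv0 : f v = 0
          · rw [hv0, mul_zero, ← hv0]; exact hfv
          · have : s v = 1 := hs4 v hv0 (fun hfr => hfr.2 v (ConnIn.refl hv0) hv')
            rw [this, one_mul]; exact hfv
        · rcases hs2 v with h1 | h1
          · rw [h1, one_mul]; exact hfv
          · rw [h1, hsymκ v hv']
            exact ⟨f v, hfv, by ring⟩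
    refine ⟨⟨fun v => s v * f v, hmem⟩, ?_⟩
    apply Subtype.ext
    funext v
    show (if s v * f v < 0 then (-1 : ℤ) else 1) = s v
    by_cases hv0 : f v = 0
    · rw [hv0, mul_zero, if_neg (by omega)]
      exact (hs1 v (by simp [suppOf, hv0])).symm
    · have hfpos : 0 < f v := lt_of_le_of_ne (hf0 v) (Ne.symm hv0)
      rcases hs2 v with h1 | h1
      · rw [h1, one_mul, if_neg (by omega)]
      · rw [h1, if_pos (by omega)]

lemma sup_inf_mem {f g : V → ℤ} (hf : f ∈ HomSet D B κ) (hg : g ∈ HomSet D B κ) :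
    f ⊔ g ∈ HomSet D B κ ∧ f ⊓ g ∈ HomSet D B κ := by
  have harith : ∀ u v, u ∈ D → v ∈ D → adj u v →
      |max (f u) (g u) - max (f v) (g v)| = 1 ∧ |min (f u) (g u) - min (f v) (g v)| = 1 := by
    intro u v hu hv huv
    have h1 := hf.1.1 u v hu hv huv
    have h2 := hg.1.1 u v hu hv huv
    have hp : Even (f u - g u) := by
      obtain ⟨k, hk⟩ := hf.1.2.1 u hu
      obtain ⟨l, hl⟩ := hg.1.2.1 u hu
      exact ⟨k - l, by omega⟩
    have hp' : Even (f v - g v) := by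
      obtain ⟨k, hk⟩ := hf.1.2.1 v hv
      obtain ⟨l, hl⟩ := hg.1.2.1 v hv
      exact ⟨k - l, by omega⟩
    obtain ⟨k, hk⟩ := hp
    obtain ⟨l, hl⟩ := hp'
    simp only [Int.abs_eq_natAbs] at *
    omega
  constructor
  · refine ⟨⟨?_, ?_, ?_⟩, ?_⟩
    · intro u v hu hv huv
      show |(f u ⊔ g u) - (f v ⊔ g v)| = 1
      exact (harith u v hu hv huv).1
    · intro v hv
      show Even ((f v ⊔ g v) + v.1 + v.2)
      rcases le_total (f v) (g v) with h' | h'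
      · rw [max_eq_right h']; exact hg.1.2.1 v hv
      · rw [max_eq_left h']; exact hf.1.2.1 v hv
    · intro v hv
      show f v ⊔ g v = 0
      rw [hf.1.2.2 v hv, hg.1.2.2 v hv]; rfl
    · intro v hv
      show f v ⊔ g v ∈ κ v
      rcases le_total (f v) (g v) with h' | h'
      · rw [max_eq_right h']; exact hg.2 v hv
      · rw [max_eq_left h']; exact hf.2 v hv
  · refine ⟨⟨?_, ?_, ?_⟩, ?_⟩
    · intro u v hu hv huv
      show |(f u ⊓ g u) - (f v ⊓ g v)| = 1
      exact (harith u v hu hv huv).2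
    · intro v hv
      show Even ((f v ⊓ g v) + v.1 + v.2)
      rcases le_total (f v) (g v) with h' | h'
      · rw [min_eq_left h']; exact hf.1.2.1 v hv
      · rw [min_eq_right h']; exact hg.1.2.1 v hv
    · intro v hv
      show f v ⊓ g v = 0
      rw [hf.1.2.2 v hv, hg.1.2.2 v hv]; rfl
    · intro v hv
      show f v ⊓ g v ∈ κ v
      rcases le_total (f v) (g v) with h' | h'
      · rw [min_eq_left h']; exact hf.2 v hv
      · rw [min_eq_right h']; exact hg.2 v hv

lemma interiority {f g : V → ℤ} (hf : f ∈ HomSet D B κ) (hg : g ∈ HomSet D B κ)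
    (hf0 : ∀ v, 0 ≤ f v) (hg0 : ∀ v, 0 ≤ g v) :
    ∀ x y, adj x y → x ∈ suppOf f → y ∈ suppOf g → x ∈ suppOf g ∨ y ∈ suppOf f := by
  intro x y hadj hx hy
  by_contra hcon
  push_neg at hcon
  obtain ⟨hxg, hyf⟩ := hcon
  simp only [suppOf, Set.mem_setOf_eq, not_not] at hx hy hxg hyf
  have hxD : x ∈ D := suppOf_subset hf.1 hx
  have hyD : y ∈ D := suppOf_subset hg.1 hy
  have h1 := hf.1.1 x y hxD hyD hadj
  have h2 := hg.1.1 x y hxD hyD hadj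
  obtain ⟨k, hk⟩ := hf.1.2.1 x hxD
  obtain ⟨l, hl⟩ := hg.1.2.1 x hxD
  simp only [Int.abs_eq_natAbs] at h1 h2
  omega

lemma mu_supermodular (hD : D.Finite) (hB : B ⊆ D) (hup : Bpos ∪ Bsym = B)
    (hposκ : ∀ v ∈ Bpos, κ v ⊆ {x : ℤ | 0 ≤ x})
    (hsymκ : ∀ v ∈ Bsym, κ v = (fun x : ℤ => -x) '' κ v)
    {f g : V → ℤ} (hf : f ∈ HomSet D B κ) (hf0 : ∀ v, 0 ≤ f v)
    (hg : g ∈ HomSet D B κ) (hg0 : ∀ v, 0 ≤ g v) :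
    Nat.card ↥{h | h ∈ HomSet D B κ ∧ (fun v => |h v|) = f} *
      Nat.card ↥{h | h ∈ HomSet D B κ ∧ (fun v => |h v|) = g} ≤
    Nat.card ↥{h | h ∈ HomSet D B κ ∧ (fun v => |h v|) = f ⊓ g} *
      Nat.card ↥{h | h ∈ HomSet D B κ ∧ (fun v => |h v|) = f ⊔ g} := by
  obtain ⟨hsup, hinf⟩ := sup_inf_mem hf hg
  have hsup0 : ∀ v, 0 ≤ (f ⊔ g) v := fun v => le_trans (hf0 v) le_sup_left
  have hinf0 : ∀ v, 0 ≤ (f ⊓ g) v := fun v => le_inf (hf0 v) (hg0 v)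
  have hsuppInf : suppOf (f ⊓ g) = suppOf f ∩ suppOf g := by
    ext v
    have := hf0 v; have := hg0 v
    simp only [suppOf, Set.mem_setOf_eq, Set.mem_inter_iff, Pi.inf_apply]
    omega
  have hsuppSup : suppOf (f ⊔ g) = suppOf f ∪ suppOf g := by
    ext v
    have := hf0 v; have := hg0 v
    simp only [suppOf, Set.mem_setOf_eq, Set.mem_union, Pi.sup_apply]
    omega
  rw [fiber_card hB hup hposκ hsymκ hf hf0, fiber_card hB hup hposκ hsymκ hg hg0,
    fiber_card hB hup hposκ hsymκ hinf hinf0, fiber_card hB hup hposκ hsymκ hsup hsup0,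
    card_sgnSet (hD.subset (suppOf_subset hf.1)),
    card_sgnSet (hD.subset (suppOf_subset hg.1)),
    card_sgnSet (hD.subset (suppOf_subset hinf.1)),
    card_sgnSet (hD.subset (suppOf_subset hsup.1)),
    hsuppInf, hsuppSup, ← pow_add, ← pow_add]
  exact Nat.pow_le_pow_right (by norm_num)
    (freeQ_card_ineq D Bpos (suppOf f) (suppOf g) hD (suppOf_subset hf.1)
      (suppOf_subset hg.1) (interiority hf hg hf0 hg0))

end HeightFns

open scoped FinsetFamily

/-- The FKG inequality for `|h|`. -/
theorem fkg_abs (D : Set V) (hD : D.Finite) (B : Set V) (hB : B ⊆ D)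
    (κ : V → Set ℤ) (Bpos Bsym : Set V)
    (hup : Bpos ∪ Bsym = B) (hdis : Disjoint Bpos Bsym)
    (hposκ : ∀ v ∈ Bpos, κ v ⊆ {x : ℤ | 0 ≤ x})
    (hsymκ : ∀ v ∈ Bsym, κ v = (fun x : ℤ => -x) '' κ v)
    (hint : ∀ v ∈ B, ({x ∈ κ v | 0 ≤ x}).OrdConnected)
    (hne : (HomSet D B κ).Nonempty) (hfin : (HomSet D B κ).Finite)
    (F G : (V → ℤ) → ℝ) (hF : IncreasingOn D F) (hG : IncreasingOn D G) :
    expec (HomSet D B κ) (fun h => F fun v => |h v|) *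
        expec (HomSet D B κ) (fun h => G fun v => |h v|) ≤
      expec (HomSet D B κ) (fun h => (F fun v => |h v|) * (G fun v => |h v|)) := by
  classical
  haveI : DecidableEq (V → ℤ) := Classical.decEq _
  set Sfin : Finset (V → ℤ) := hfin.toFinset with hSfin
  have hScoe : ↑Sfin = HomSet D B κ := hfin.coe_toFinset
  set absm : (V → ℤ) → (V → ℤ) := fun h v => |h v| with habsm
  set Tfin : Finset (V → ℤ) := Sfin.image absm with hTfin
  set μ : (V → ℤ) → ℝ := fun f => ((Sfin.filter (fun h => absm h = f)).card : ℝ) with hμ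
  have hμ0 : ∀ f, 0 ≤ μ f := fun f => Nat.cast_nonneg _
  have hmemS : ∀ {h : V → ℤ}, h ∈ Sfin ↔ h ∈ HomSet D B κ := fun {h} => hfin.mem_toFinset
  have hTchar : ∀ f, f ∈ Tfin ↔ (f ∈ HomSet D B κ ∧ ∀ v, 0 ≤ f v) := by
    intro f
    constructor
    · rintro hf
      obtain ⟨h, hh, rfl⟩ := Finset.mem_image.mp hf
      exact ⟨abs_mem_homSet hup hposκ hsymκ (hmemS.mp hh), fun v => abs_nonneg _⟩
    · rintro ⟨hfS, hf0⟩
      refine Finset.mem_image.mpr ⟨f, hmemS.mpr hfS, ?_⟩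
      funext v
      exact abs_of_nonneg (hf0 v)
  have hμ_ne : ∀ {f}, μ f ≠ 0 → f ∈ Tfin := by
    intro f hf
    rw [hμ] at hf
    simp only [ne_eq, Nat.cast_eq_zero, Finset.card_eq_zero] at hf
    obtain ⟨h, hh⟩ := Finset.nonempty_iff_ne_empty.mpr hf
    rw [Finset.mem_filter] at hh
    exact hh.2 ▸ Finset.mem_image_of_mem absm hh.1
  have hμNat : ∀ f, μ f =
      (Nat.card ↥{h | h ∈ HomSet D B κ ∧ (fun v => |h v|) = f} : ℝ) := by
    intro f
    have hseteq : {h | h ∈ HomSet D B κ ∧ (fun v => |h v|) = f} =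
        ↑(Sfin.filter (fun h => absm h = f)) := by
      ext h
      constructor
      · rintro ⟨h1, h2⟩
        exact Finset.mem_coe.mpr (Finset.mem_filter.mpr ⟨hmemS.mpr h1, h2⟩)
      · intro hh
        have := Finset.mem_filter.mp (Finset.mem_coe.mp hh)
        exact ⟨hmemS.mp this.1, this.2⟩
    rw [hseteq, Nat.card_coe_set_eq, Set.ncard_coe_finset]
  have hgroup : ∀ φ : (V → ℤ) → ℝ,
      (∑ h ∈ Sfin, φ (absm h)) = ∑ f ∈ Tfin, μ f * φ f := by
    intro φ
    rw [← Finset.sum_fiberwise_of_maps_to (fun h hh => Finset.mem_image_of_mem absm hh)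
      (fun h => φ (absm h))]
    refine Finset.sum_congr rfl ?_
    intro f hf
    have hc : ∀ h ∈ Sfin.filter (fun h => absm h = f), φ (absm h) = φ f := by
      intro h hh
      rw [(Finset.mem_filter.mp hh).2]
    rw [Finset.sum_congr rfl hc, Finset.sum_const, nsmul_eq_mul]
  set n : ℝ := (Sfin.card : ℝ) with hn
  have hexp : ∀ φ : (V → ℤ) → ℝ,
      expec (HomSet D B κ) (fun h => φ (fun v => |h v|)) =
        (∑ f ∈ Tfin, μ f * φ f) / n := by
    intro φ
    rw [expec, ← hgroup φ]
    congr 1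
    · rw [← hScoe, finsum_mem_coe_finset]
    · rw [← hScoe, Nat.card_coe_set_eq, Set.ncard_coe_finset]
  have hμsum : ∑ f ∈ Tfin, μ f = n := by
    have h1 := hgroup (fun _ => (1 : ℝ))
    simpa using h1.symm
  have hclos : ∀ a ∈ Tfin, ∀ b ∈ Tfin, a ⊓ b ∈ Tfin ∧ a ⊔ b ∈ Tfin := by
    intro a ha b hb
    obtain ⟨haS, ha0⟩ := (hTchar a).mp ha
    obtain ⟨hbS, hb0⟩ := (hTchar b).mp hb
    obtain ⟨hsupS, hinfS⟩ := sup_inf_mem haS hbS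
    exact ⟨(hTchar _).mpr ⟨hinfS, fun v => le_inf (ha0 v) (hb0 v)⟩,
      (hTchar _).mpr ⟨hsupS, fun v => le_trans (ha0 v) ((Pi.le_def.mp le_sup_left) v)⟩⟩
  have hinfs : Tfin ⊼ Tfin = Tfin := by
    apply Finset.Subset.antisymm
    · intro f hf
      obtain ⟨a, ha, b, hb, rfl⟩ := Finset.mem_infs.mp hf
      exact (hclos a ha b hb).1
    · intro f hf
      exact Finset.mem_infs.mpr ⟨f, hf, f, hf, inf_idem f⟩
  have hsups : Tfin ⊻ Tfin = Tfin := by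
    apply Finset.Subset.antisymm
    · intro f hf
      obtain ⟨a, ha, b, hb, rfl⟩ := Finset.mem_sups.mp hf
      exact (hclos a ha b hb).2
    · intro f hf
      exact Finset.mem_sups.mpr ⟨f, hf, f, hf, sup_idem f⟩
  have hTne : Tfin.Nonempty := by
    obtain ⟨h0, hh0⟩ := hne
    exact ⟨absm h0, Finset.mem_image_of_mem absm (hmemS.mpr hh0)⟩
  set cF : ℝ := Tfin.sup' hTne (fun f => -F f) with hcF
  set cG : ℝ := Tfin.sup' hTne (fun f => -G f) with hcG
  set F' : (V → ℤ) → ℝ := fun f => F f + cF with hF'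
  set G' : (V → ℤ) → ℝ := fun f => G f + cG with hG'
  have hF'0 : ∀ f ∈ Tfin, 0 ≤ F' f := by
    intro f hf
    have h1 : -F f ≤ cF := by rw [hcF]; exact Finset.le_sup' (fun f => -F f) hf
    show 0 ≤ F f + cF
    linarith
  have hG'0 : ∀ f ∈ Tfin, 0 ≤ G' f := by
    intro f hf
    have h1 : -G f ≤ cG := by rw [hcG]; exact Finset.le_sup' (fun f => -G f) hf
    show 0 ≤ G f + cG
    linarith
  have hF'mono : ∀ a b : V → ℤ, F' a ≤ F' (a ⊔ b) := by
    intro a b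
    have h1 := hF a (a ⊔ b) (fun v _ => (Pi.le_def.mp le_sup_left) v)
    show F a + cF ≤ F (a ⊔ b) + cF
    linarith
  have hG'mono : ∀ a b : V → ℤ, G' b ≤ G' (a ⊔ b) := by
    intro a b
    have h1 := hG b (a ⊔ b) (fun v _ => (Pi.le_def.mp le_sup_right) v)
    show G b + cG ≤ G (a ⊔ b) + cG
    linarith
  have hμsm : ∀ a ∈ Tfin, ∀ b ∈ Tfin, μ a * μ b ≤ μ (a ⊓ b) * μ (a ⊔ b) := by
    intro a ha b hb
    obtain ⟨haS, ha0⟩ := (hTchar a).mp ha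
    obtain ⟨hbS, hb0⟩ := (hTchar b).mp hb
    rw [hμNat a, hμNat b, hμNat (a ⊓ b), hμNat (a ⊔ b), ← Nat.cast_mul, ← Nat.cast_mul,
      Nat.cast_le]
    exact mu_supermodular hD hB hup hposκ hsymκ haS ha0 hbS hb0
  set f₁ : (V → ℤ) → ℝ := fun f => μ f * F' f with hf₁
  set f₂ : (V → ℤ) → ℝ := fun f => μ f * G' f with hf₂
  set f₄ : (V → ℤ) → ℝ := fun f => μ f * (F' f * G' f) with hf₄
  have h₁0 : (0 : (V → ℤ) → ℝ) ≤ f₁ := by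
    intro f
    simp only [Pi.zero_apply]
    show (0 : ℝ) ≤ μ f * F' f
    by_cases h : μ f = 0
    · rw [h, zero_mul]
    · exact mul_nonneg (hμ0 f) (hF'0 f (hμ_ne h))
  have h₂0 : (0 : (V → ℤ) → ℝ) ≤ f₂ := by
    intro f
    simp only [Pi.zero_apply]
    show (0 : ℝ) ≤ μ f * G' f
    by_cases h : μ f = 0
    · rw [h, zero_mul]
    · exact mul_nonneg (hμ0 f) (hG'0 f (hμ_ne h))
  have h₄0 : (0 : (V → ℤ) → ℝ) ≤ f₄ := by
    intro f
    simp only [Pi.zero_apply]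
    show (0 : ℝ) ≤ μ f * (F' f * G' f)
    by_cases h : μ f = 0
    · rw [h, zero_mul]
    · exact mul_nonneg (hμ0 f) (mul_nonneg (hF'0 f (hμ_ne h)) (hG'0 f (hμ_ne h)))
  have h₄0' : ∀ f, (0 : ℝ) ≤ μ f * (F' f * G' f) := fun f => h₄0 f
  have hcond : ∀ a b, f₁ a * f₂ b ≤ μ (a ⊓ b) * f₄ (a ⊔ b) := by
    intro a b
    show μ a * F' a * (μ b * G' b) ≤ μ (a ⊓ b) * (μ (a ⊔ b) * (F' (a ⊔ b) * G' (a ⊔ b)))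
    by_cases hμa : μ a = 0
    · rw [hμa, zero_mul, zero_mul]
      exact mul_nonneg (hμ0 _) (h₄0' _)
    by_cases hμb : μ b = 0
    · rw [hμb, zero_mul, mul_zero]
      exact mul_nonneg (hμ0 _) (h₄0' _)
    have ha := hμ_ne hμa
    have hb := hμ_ne hμb
    have h1 : F' a * G' b ≤ F' (a ⊔ b) * G' (a ⊔ b) :=
      mul_le_mul (hF'mono a b) (hG'mono a b) (hG'0 b hb)
        (le_trans (hF'0 a ha) (hF'mono a b))
    have h2 := hμsm a ha b hb
    calc μ a * F' a * (μ b * G' b) = (μ a * μ b) * (F' a * G' b) := by ring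
      _ ≤ (μ (a ⊓ b) * μ (a ⊔ b)) * (F' (a ⊔ b) * G' (a ⊔ b)) :=
          mul_le_mul h2 h1 (mul_nonneg (hF'0 a ha) (hG'0 b hb))
            (mul_nonneg (hμ0 _) (hμ0 _))
      _ = μ (a ⊓ b) * (μ (a ⊔ b) * (F' (a ⊔ b) * G' (a ⊔ b))) := by ring
  have h4f := four_functions_theorem f₁ f₂ μ f₄ h₁0 h₂0 (fun f => hμ0 f) h₄0 hcond Tfin Tfin
  rw [hinfs, hsups] at h4f
  set SF : ℝ := ∑ f ∈ Tfin, μ f * F f with hSF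
  set SG : ℝ := ∑ f ∈ Tfin, μ f * G f with hSG
  set SFG : ℝ := ∑ f ∈ Tfin, μ f * (F f * G f) with hSFG
  have hsum1 : ∑ f ∈ Tfin, f₁ f = SF + cF * n := by
    have hc : ∀ f ∈ Tfin, f₁ f = μ f * F f + cF * μ f := by
      intro f _; show μ f * (F f + cF) = _; ring
    rw [Finset.sum_congr rfl hc, Finset.sum_add_distrib, ← Finset.mul_sum, hμsum, hSF]
  have hsum2 : ∑ f ∈ Tfin, f₂ f = SG + cG * n := by
    have hc : ∀ f ∈ Tfin, f₂ f = μ f * G f + cG * μ f := by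
      intro f _; show μ f * (G f + cG) = _; ring
    rw [Finset.sum_congr rfl hc, Finset.sum_add_distrib, ← Finset.mul_sum, hμsum, hSG]
  have hsum4 : ∑ f ∈ Tfin, f₄ f =
      SFG + cG * SF + cF * SG + cF * cG * n := by
    have hc : ∀ f ∈ Tfin, f₄ f = μ f * (F f * G f) + cG * (μ f * F f) +
        cF * (μ f * G f) + cF * cG * μ f := by
      intro f _; show μ f * ((F f + cF) * (G f + cG)) = _; ring
    rw [Finset.sum_congr rfl hc, Finset.sum_add_distrib, Finset.sum_add_distrib,
      Finset.sum_add_distrib, ← Finset.mul_sum, ← Finset.mul_sum, ← Finset.mul_sum,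
      hμsum, hSF, hSG, hSFG]
  rw [hsum1, hsum2, hμsum, hsum4] at h4f
  have expand : (SF + cF * n) * (SG + cG * n) =
      SF * SG + (cG * (n * SF) + cF * (n * SG) + cF * cG * (n * n)) := by ring
  have expand2 : n * (SFG + cG * SF + cF * SG + cF * cG * n) =
      n * SFG + (cG * (n * SF) + cF * (n * SG) + cF * cG * (n * n)) := by ring
  rw [expand, expand2] at h4f
  have key : SF * SG ≤ n * SFG := by linarith
  have hnpos : (0 : ℝ) < n := by
    rw [hn]
    have hne' : Sfin.Nonempty := ⟨hne.choose, hmemS.mpr hne.choose_spec⟩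
    exact_mod_cast Finset.card_pos.mpr hne'
  have e1 : expec (HomSet D B κ) (fun h => F fun v => |h v|) = SF / n := hexp F
  have e2 : expec (HomSet D B κ) (fun h => G fun v => |h v|) = SG / n := hexp G
  have e3 : expec (HomSet D B κ)
      (fun h => (F fun v => |h v|) * (G fun v => |h v|)) = SFG / n :=
    hexp (fun x => F x * G x)
  rw [e1, e2, e3, div_mul_div_comm, div_le_div_iff₀ (mul_pos hnpos hnpos) hnpos]
  calc SF * SG * n ≤ n * SFG * n := mul_le_mul_of_nonneg_right key hnpos.le
    _ = SFG * (n * n) := by ring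


end SquareIce
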